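/- The generating polynomial B_n(q, Y0, Y1, Z) = sum over w in B_n of q^{fmaj w} Y0^{fix^+ w} Y1^{fix^- w} Z^{neg w} satisfies B_n(q, Y0, Y1, Z) = q^{n^2} Z^n B_n(q^{-1}, Y1, Y0, Z^{-1}). -/
import Mathlib


open Finset

attribute [local instance] Classical.propDecidable

noncomputable section

/-- The word `x_1 x_2 ... x_n` (0-indexed) of a signed permutation of order `n`,
encoded as a pair (permutation, signs): `x_i = ±(σ(i)+1)`. -/
def sword (n : ℕ) (w : Equiv.Perm (Fin n) × (Fin n → Bool)) : ℕ → ℤ :=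
  fun i => if h : i < n then
      (if w.2 ⟨i, h⟩ then -(((w.1 ⟨i, h⟩ : ℕ) : ℤ) + 1) else (((w.1 ⟨i, h⟩ : ℕ) : ℤ) + 1))
    else 0

/-- number of negative letters -/
def negStat (n : ℕ) (x : ℕ → ℤ) : ℕ := ((Finset.range n).filter (fun i => x i < 0)).card

/-- number of positive fixed points (`x_i = i`, 1-indexed) -/
def fixPlus (n : ℕ) (x : ℕ → ℤ) : ℕ :=
  ((Finset.range n).filter (fun i => x i = (i : ℤ) + 1)).card

/-- number of negative fixed points (`x_i = -i`, 1-indexed) -/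
def fixMinus (n : ℕ) (x : ℕ → ℤ) : ℕ :=
  ((Finset.range n).filter (fun i => x i = -((i : ℤ) + 1))).card

/-- major index of the word -/
def majStat (n : ℕ) (x : ℕ → ℤ) : ℕ :=
  ∑ i ∈ Finset.range (n - 1), if x (i + 1) < x i then i + 1 else 0

/-- number of inversions of the word -/
def invStat (n : ℕ) (x : ℕ → ℤ) : ℕ :=
  ((Finset.range n ×ˢ Finset.range n).filter (fun p => p.1 < p.2 ∧ x p.2 < x p.1)).card

/-- length function `ℓ(w) = inv w + ∑_{x_i<0} |x_i|` -/
def lenStat (n : ℕ) (x : ℕ → ℤ) : ℕ :=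
  invStat n x + ∑ i ∈ Finset.range n, if x i < 0 then (x i).natAbs else 0

/-- flag-major index `fmaj = 2 maj + neg` -/
def fmajStat (n : ℕ) (x : ℕ → ℤ) : ℕ := 2 * majStat n x + negStat n x

/-- the word `x_0 ... x_{m-1}` has its leftmost trough at position `2k` (1-indexed):
`x_1 > x_2 > ... > x_{2k}` and `x_{2k} < x_{2k+1}` (with `x_{m+1} = ∞`). -/
def IsDesarAt (m k : ℕ) (x : ℕ → ℤ) : Prop :=
  1 ≤ k ∧ 2 * k ≤ m ∧ (∀ i, i + 1 < 2 * k → x (i + 1) < x i) ∧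
    (2 * k = m ∨ x (2 * k - 1) < x (2 * k))

/-- a word of length `m` is a desarrangement (empty word included) -/
def IsDesar (m : ℕ) (x : ℕ → ℤ) : Prop :=
  m = 0 ∨ ∃ k, IsDesarAt m k x

/-- the length of the longest right factor of the word of length `n`
which is a desarrangement -/
def dlen (n : ℕ) (x : ℕ → ℤ) : ℕ :=
  sSup {m | m ≤ n ∧ IsDesar m (fun i => x (n - m + i))}

/-- number of letters of `w^-` in the pixed factorization `w = w^- w^+ w^d` -/
def pixMinus (n : ℕ) (x : ℕ → ℤ) : ℕ :=
  ((Finset.range (n - dlen n x)).filter (fun i => x i < 0)).card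

/-- number of letters of `w^+` in the pixed factorization `w = w^- w^+ w^d` -/
def pixPlus (n : ℕ) (x : ℕ → ℤ) : ℕ :=
  ((Finset.range (n - dlen n x)).filter (fun i => 0 < x i)).card

/-- the number of derangements of an `m`-element set -/
def dnum (m : ℕ) : ℕ :=
  (Finset.univ.filter (fun σ : Equiv.Perm (Fin m) => ∀ i, σ i ≠ i)).card

/-- the word of an ordinary permutation of `{1, ..., m}` -/
def pword (m : ℕ) (σ : Equiv.Perm (Fin m)) : ℕ → ℤ :=
  fun i => if h : i < m then ((σ ⟨i, h⟩ : ℕ) : ℤ) + 1 else 0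

/-- the q-ascending factorial `(q;q)_m` -/
def qq {K : Type*} [CommRing K] (q : K) (m : ℕ) : K :=
  ∏ i ∈ Finset.range m, (1 - q ^ (i + 1))

/-- `D_m(q)`: generating polynomial for derangements of order `m` by major index -/
def Dmaj {K : Type*} [CommRing K] (q : K) (m : ℕ) : K :=
  ∑ σ ∈ Finset.univ.filter (fun σ : Equiv.Perm (Fin m) => ∀ i, σ i ≠ i),
    q ^ majStat m (pword m σ)

lemma sword_bar (n : ℕ) (σ : Equiv.Perm (Fin n)) (b : Fin n → Bool) :
    sword n (σ, fun i => !(b i)) = fun i => -(sword n (σ, b) i) := by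
  funext i
  simp only [sword]
  split
  · rename_i h
    cases hb : b ⟨i, h⟩ <;> simp [hb]
  · simp

lemma sword_nonzero (n : ℕ) (w : Equiv.Perm (Fin n) × (Fin n → Bool)) {i : ℕ} (hi : i < n) :
    sword n w i ≠ 0 := by
  simp only [sword, dif_pos hi]
  have hc : (0 : ℤ) ≤ ((w.1 ⟨i, hi⟩ : ℕ) : ℤ) := Int.natCast_nonneg _
  split <;> omega

lemma sword_ne (n : ℕ) (w : Equiv.Perm (Fin n) × (Fin n → Bool)) {i j : ℕ}
    (hi : i < n) (hj : j < n) (hij : i ≠ j) : sword n w i ≠ sword n w j := by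
  simp only [sword, dif_pos hi, dif_pos hj]
  have h1 : (0 : ℤ) ≤ ((w.1 ⟨i, hi⟩ : ℕ) : ℤ) := Int.natCast_nonneg _
  have h2 : (0 : ℤ) ≤ ((w.1 ⟨j, hj⟩ : ℕ) : ℤ) := Int.natCast_nonneg _
  have hne : ((w.1 ⟨i, hi⟩ : ℕ) : ℤ) ≠ ((w.1 ⟨j, hj⟩ : ℕ) : ℤ) := by
    intro h
    have : w.1 ⟨i, hi⟩ = w.1 ⟨j, hj⟩ := by
      apply Fin.ext
      exact_mod_cast h
    have := w.1.injective this
    simp only [Fin.mk.injEq] at this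
    exact hij this
  split <;> split <;> omega

lemma negStat_neg (n : ℕ) (x : ℕ → ℤ) (hnz : ∀ i < n, x i ≠ 0) :
    negStat n (fun i => -(x i)) + negStat n x = n := by
  unfold negStat
  rw [← Finset.card_union_of_disjoint]
  · have : (Finset.range n).filter (fun i => -x i < 0) ∪
        (Finset.range n).filter (fun i => x i < 0) = Finset.range n := by
      apply Finset.Subset.antisymm
      · exact Finset.union_subset (Finset.filter_subset _ _) (Finset.filter_subset _ _)
      · intro i hi
        have := hnz i (Finset.mem_range.mp hi)
        simp only [Finset.mem_union, Finset.mem_filter]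
        rcases lt_or_gt_of_ne this with h | h
        · exact Or.inr ⟨hi, h⟩
        · exact Or.inl ⟨hi, by omega⟩
    rw [this, Finset.card_range]
  · rw [Finset.disjoint_filter]
    intro i _ h1 h2
    dsimp only at h1
    omega

lemma fixPlus_neg (n : ℕ) (x : ℕ → ℤ) :
    fixPlus n (fun i => -(x i)) = fixMinus n x := by
  unfold fixPlus fixMinus
  congr 1
  apply Finset.filter_congr
  intro i _
  show -(x i) = (i : ℤ) + 1 ↔ x i = -((i : ℤ) + 1)
  omega

lemma fixMinus_neg (n : ℕ) (x : ℕ → ℤ) :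
    fixMinus n (fun i => -(x i)) = fixPlus n x := by
  unfold fixPlus fixMinus
  congr 1
  apply Finset.filter_congr
  intro i _
  show -(x i) = -((i : ℤ) + 1) ↔ x i = (i : ℤ) + 1
  omega

lemma majStat_neg (n : ℕ) (x : ℕ → ℤ)
    (hne : ∀ i, i + 1 < n → x i ≠ x (i + 1)) :
    majStat n (fun i => -(x i)) + majStat n x = ∑ i ∈ Finset.range (n - 1), (i + 1) := by
  unfold majStat
  rw [← Finset.sum_add_distrib]
  apply Finset.sum_congr rfl
  intro i hi
  have hi' : i + 1 < n := by
    have := Finset.mem_range.mp hi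
    omega
  have := hne i hi'
  have hb : ∀ j, (fun i => -(x i)) j = -(x j) := fun _ => rfl
  simp only [hb]
  split_ifs <;> omega

lemma sum_range_succ_id (m : ℕ) : 2 * (∑ i ∈ Finset.range m, (i + 1)) = m * (m + 1) := by
  induction m with
  | zero => simp
  | succ k ih => rw [Finset.sum_range_succ]; nlinarith [ih]

lemma fmaj_add (n : ℕ) (x : ℕ → ℤ) (hnz : ∀ i < n, x i ≠ 0)
    (hne : ∀ i, i + 1 < n → x i ≠ x (i + 1)) :
    fmajStat n (fun i => -(x i)) + fmajStat n x = n ^ 2 := by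
  unfold fmajStat
  have h1 := majStat_neg n x hne
  have h2 := negStat_neg n x hnz
  have h3 := sum_range_succ_id (n - 1)
  rcases Nat.eq_zero_or_pos n with h | h
  · subst h; simp [majStat, negStat]
  · have : n - 1 + 1 = n := by omega
    rw [this] at h3
    nlinarith [h1, h2, h3]

theorem stmt14 (K : Type*) [Field K] (q Y0 Y1 Z : K) (hq : q ≠ 0) (hZ : Z ≠ 0) (n : ℕ) :
    (∑ w : Equiv.Perm (Fin n) × (Fin n → Bool),
        q ^ fmajStat n (sword n w) * Y0 ^ fixPlus n (sword n w)
          * Y1 ^ fixMinus n (sword n w) * Z ^ negStat n (sword n w))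
      = q ^ (n ^ 2) * Z ^ n *
        (∑ w : Equiv.Perm (Fin n) × (Fin n → Bool),
          q⁻¹ ^ fmajStat n (sword n w) * Y1 ^ fixPlus n (sword n w)
            * Y0 ^ fixMinus n (sword n w) * Z⁻¹ ^ negStat n (sword n w)) := by
  have hbar : Function.Bijective
      (fun w : Equiv.Perm (Fin n) × (Fin n → Bool) => (w.1, fun i => !(w.2 i))) := by
    apply Function.Involutive.bijective
    intro w
    simp
  rw [← Function.Bijective.sum_comp hbar
    (fun w => q⁻¹ ^ fmajStat n (sword n w) * Y1 ^ fixPlus n (sword n w)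
      * Y0 ^ fixMinus n (sword n w) * Z⁻¹ ^ negStat n (sword n w)),
    Finset.mul_sum]
  apply Finset.sum_congr rfl
  intro w _
  have hx : sword n ((w.1, fun i => !(w.2 i)) : Equiv.Perm (Fin n) × (Fin n → Bool))
      = fun i => -(sword n w i) := by
    have := sword_bar n w.1 w.2
    simpa using this
  simp only [hx]
  have hnz : ∀ i < n, sword n w i ≠ 0 := fun i hi => sword_nonzero n w hi
  have hne : ∀ i, i + 1 < n → sword n w i ≠ sword n w (i + 1) := by
    intro i hi
    exact sword_ne n w (by omega) hi (by omega)
  have hfm := fmaj_add n (sword n w) hnz hne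
  have hng := negStat_neg n (sword n w) hnz
  rw [fixPlus_neg, fixMinus_neg]
  have hq1 : q ^ (n ^ 2) = q ^ fmajStat n (fun i => -(sword n w i))
      * q ^ fmajStat n (sword n w) := by rw [← pow_add, hfm]
  have hq' : q ^ (n ^ 2) * q⁻¹ ^ fmajStat n (fun i => -(sword n w i))
      = q ^ fmajStat n (sword n w) := by
    rw [hq1, mul_comm (q ^ _), mul_assoc, ← mul_pow, mul_inv_cancel₀ hq, one_pow, mul_one]
  have hZ1 : Z ^ n = Z ^ negStat n (fun i => -(sword n w i))
      * Z ^ negStat n (sword n w) := by rw [← pow_add, hng]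
  have hZ' : Z ^ n * Z⁻¹ ^ negStat n (fun i => -(sword n w i))
      = Z ^ negStat n (sword n w) := by
    rw [hZ1, mul_comm (Z ^ _), mul_assoc, ← mul_pow, mul_inv_cancel₀ hZ, one_pow, mul_one]
  calc q ^ fmajStat n (sword n w) * Y0 ^ fixPlus n (sword n w)
        * Y1 ^ fixMinus n (sword n w) * Z ^ negStat n (sword n w)
      = (q ^ (n ^ 2) * q⁻¹ ^ fmajStat n (fun i => -(sword n w i)))
        * Y0 ^ fixPlus n (sword n w) * Y1 ^ fixMinus n (sword n w)
        * (Z ^ n * Z⁻¹ ^ negStat n (fun i => -(sword n w i))) := by rw [hq', hZ']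
    _ = q ^ (n ^ 2) * Z ^ n *
        (q⁻¹ ^ fmajStat n (fun i => -(sword n w i)) * Y1 ^ fixMinus n (sword n w)
          * Y0 ^ fixPlus n (sword n w) * Z⁻¹ ^ negStat n (fun i => -(sword n w i))) := by
        ring
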